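/- The family of open discs F_n = B((n, 1/n), 1/n) for n ≥ 1 in the plane cannot be pierced by any finite set of lines: every line intersects only finitely many members of the family. -/

import Mathlib

/-- A line in the plane: a nonempty affine subspace of dimension 1. -/
def IsLine (L : AffineSubspace ℝ (EuclideanSpace ℝ (Fin 2))) : Prop :=
  (L : Set (EuclideanSpace ℝ (Fin 2))).Nonempty ∧ Module.finrank ℝ L.direction = 1

/-- The center `(n, 1/n)` of the `n`-th disc. -/
noncomputable def discCenter (n : ℕ) : EuclideanSpace ℝ (Fin 2) :=
  (WithLp.equiv 2 (Fin 2 → ℝ)).symm ![(n : ℝ), 1 / n]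

lemma real_bound (a b e N : ℝ) (hN : 0 < N) (hcase : a ≠ 0 ∨ b ≠ 0 ∨ N ≤ |e|) :
    ∃ R : ℝ, ∀ n : ℝ, 1 ≤ n → |b * n - a * n ^ 2 - e| < N → n ≤ R := by
  rcases eq_or_ne a 0 with ha | ha
  · rcases eq_or_ne b 0 with hb | hb
    · have he : N ≤ |e| := by tauto
      refine ⟨0, fun n hn1 hlt => ?_⟩
      rw [ha, hb] at hlt
      simp only [zero_mul, zero_sub, zero_mul, sub_zero] at hlt
      rw [abs_neg] at hlt
      linarith
    · refine ⟨(N + |e|) / |b|, fun n hn1 hlt => ?_⟩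
      have hb' : 0 < |b| := abs_pos.mpr hb
      rw [ha] at hlt
      by_contra hgt
      push_neg at hgt
      rw [div_lt_iff₀ hb'] at hgt
      have t1 : |b * n| - |e| ≤ |b * n - 0 * n ^ 2 - e| := by
        have := abs_sub_abs_le_abs_sub (b * n) e
        have h2 : b * n - 0 * n ^ 2 - e = b * n - e := by ring
        rw [h2]
        linarith
      have t2 : |b * n| = |b| * n := by
        rw [abs_mul, abs_of_nonneg (by linarith : (0:ℝ) ≤ n)]
      linarith [t1, t2 ▸ t1]
  · refine ⟨(|b| + N + |e| + 1) / |a|, fun n hn1 hlt => ?_⟩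
    have ha' : 0 < |a| := abs_pos.mpr ha
    by_contra hgt
    push_neg at hgt
    rw [div_lt_iff₀ ha'] at hgt
    have hn0 : (0:ℝ) ≤ n := by linarith
    have t1 : |a * n ^ 2| - |e - b * n| ≤ |b * n - a * n ^ 2 - e| := by
      have h0 := abs_sub_abs_le_abs_sub (-(a * n ^ 2)) (b * n - a * n ^ 2 - e)
      have h1 : -(a * n ^ 2) - (b * n - a * n ^ 2 - e) = e - b * n := by ring
      rw [h1, abs_neg] at h0
      linarith
    have t2 : |e - b * n| ≤ |e| + |b| * n := by
      calc |e - b * n| ≤ |e| + |b * n| := abs_sub e (b * n)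
        _ = |e| + |b| * n := by rw [abs_mul, abs_of_nonneg hn0]
    have t3 : |a * n ^ 2| = |a| * n ^ 2 := by
      rw [abs_mul, abs_of_nonneg (by positivity : (0:ℝ) ≤ n ^ 2)]
    have t4 : (|b| + N + |e| + 1) * n ≤ |a| * n ^ 2 := by
      nlinarith [mul_le_mul_of_nonneg_left hgt.le hn0]
    nlinarith [t1, t2, t3, t4, hn1,
      mul_nonneg hN.le (by linarith : (0:ℝ) ≤ n - 1),
      mul_nonneg (abs_nonneg e) (by linarith : (0:ℝ) ≤ n - 1)]

lemma main_lemma (L : AffineSubspace ℝ (EuclideanSpace ℝ (Fin 2))) (hL : IsLine L) :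
    {n : ℕ | 1 ≤ n ∧
      (Metric.ball (discCenter n) (1 / n) ∩
        (L : Set (EuclideanSpace ℝ (Fin 2)))).Nonempty}.Finite := by
  obtain ⟨⟨p₀, hp₀⟩, hdim⟩ := hL
  obtain ⟨v, hv0, hv⟩ := finrank_eq_one_iff'.mp hdim
  obtain ⟨vx, hvx⟩ : ∃ x : ℝ, x = (v : EuclideanSpace ℝ (Fin 2)) 0 := ⟨_, rfl⟩
  obtain ⟨vy, hvy⟩ : ∃ x : ℝ, x = (v : EuclideanSpace ℝ (Fin 2)) 1 := ⟨_, rfl⟩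
  obtain ⟨c, hc⟩ : ∃ x : ℝ, x = (-vy) * p₀ 0 + vx * p₀ 1 := ⟨_, rfl⟩
  obtain ⟨N, hN⟩ : ∃ x : ℝ, x = Real.sqrt (vy ^ 2 + vx ^ 2) := ⟨_, rfl⟩
  have hvne : vx ≠ 0 ∨ vy ≠ 0 := by
    by_contra h
    push_neg at h
    apply hv0
    apply Subtype.ext
    rw [ZeroMemClass.coe_zero]
    apply PiLp.ext; intro i
    fin_cases i
    · show (v : EuclideanSpace ℝ (Fin 2)) 0 = 0
      rw [← hvx]; exact h.1
    · show (v : EuclideanSpace ℝ (Fin 2)) 1 = 0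
      rw [← hvy]; exact h.2
  have hNsq : N ^ 2 = vy ^ 2 + vx ^ 2 := by rw [hN]; exact Real.sq_sqrt (by positivity)
  have hNpos : 0 < N := by
    rw [hN]
    apply Real.sqrt_pos.mpr
    rcases hvne with h | h
    · positivity
    · positivity
  have hconst : ∀ p ∈ L, (-vy) * p 0 + vx * p 1 = c := by
    intro p hp
    have hmem : p -ᵥ p₀ ∈ L.direction := AffineSubspace.vsub_mem_direction hp hp₀
    obtain ⟨t, ht⟩ := hv ⟨p -ᵥ p₀, hmem⟩
    have ht' : p - p₀ = t • (v : EuclideanSpace ℝ (Fin 2)) := by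
      have h2 := congrArg Subtype.val ht
      simp only [SetLike.val_smul] at h2
      rw [h2]
      rfl
    have h0 : p 0 - p₀ 0 = t * vx := by
      have h3 := congrFun (congrArg (fun q : EuclideanSpace ℝ (Fin 2) => (q : Fin 2 → ℝ)) ht') 0
      rw [hvx]
      simpa using h3
    have h1 : p 1 - p₀ 1 = t * vy := by
      have h3 := congrFun (congrArg (fun q : EuclideanSpace ℝ (Fin 2) => (q : Fin 2 → ℝ)) ht') 1
      rw [hvy]
      simpa using h3
    rw [hc]
    linear_combination (-vy) * h0 + vx * h1
  have key : ∀ n : ℕ, (1 ≤ n ∧ (Metric.ball (discCenter n) (1 / n) ∩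
      (L : Set (EuclideanSpace ℝ (Fin 2)))).Nonempty) →
      |c * n - (-vy) * (n : ℝ) ^ 2 - vx| < N := by
    rintro n ⟨hn1, p, hpball, hpL⟩
    have hn1' : (1:ℝ) ≤ n := by exact_mod_cast hn1
    have hnpos : (0:ℝ) < n := by linarith
    have hdist : dist p (discCenter n) < 1 / n := Metric.mem_ball.mp hpball
    obtain ⟨x, hx⟩ : ∃ t : ℝ, t = p 0 - n := ⟨_, rfl⟩
    obtain ⟨y, hy⟩ : ∃ t : ℝ, t = p 1 - 1 / n := ⟨_, rfl⟩
    have hd : dist p (discCenter n) = Real.sqrt (x ^ 2 + y ^ 2) := by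
      rw [EuclideanSpace.dist_eq, Fin.sum_univ_two]
      have e0 : discCenter n 0 = (n : ℝ) := rfl
      have e1 : discCenter n 1 = 1 / (n : ℝ) := rfl
      rw [e0, e1, Real.dist_eq, Real.dist_eq, sq_abs, sq_abs, hx, hy]
    have hxy : x ^ 2 + y ^ 2 < (1 / n) ^ 2 := by
      have h1 : Real.sqrt (x ^ 2 + y ^ 2) < 1 / n := by rw [← hd]; exact hdist
      exact (Real.sqrt_lt' (by positivity)).mp h1
    have hcs : ((-vy) * x + vx * y) ^ 2 ≤ N ^ 2 * (x ^ 2 + y ^ 2) := by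
      nlinarith [sq_nonneg ((-vy) * y - vx * x)]
    have hc' : (-vy) * p 0 + vx * p 1 = c := hconst p hpL
    have hval : c * n - (-vy) * (n:ℝ) ^ 2 - vx = n * ((-vy) * x + vx * y) := by
      rw [← hc', hx, hy]
      field_simp
      ring
    rw [hval, abs_lt]
    have hA2 : (↑n * ((-vy) * x + vx * y)) ^ 2 < N ^ 2 := by
      have hlt : ((-vy) * x + vx * y) ^ 2 < N ^ 2 * (1 / n) ^ 2 :=
        lt_of_le_of_lt hcs (mul_lt_mul_of_pos_left hxy (by positivity))
      have h2 : (0:ℝ) < (n:ℝ) ^ 2 := by positivity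
      have h3 : (↑n * ((-vy) * x + vx * y)) ^ 2 = (n:ℝ) ^ 2 * ((-vy) * x + vx * y) ^ 2 := by
        ring
      rw [h3]
      calc (n:ℝ) ^ 2 * ((-vy) * x + vx * y) ^ 2
          < (n:ℝ) ^ 2 * (N ^ 2 * (1 / n) ^ 2) := by exact (mul_lt_mul_iff_right₀ h2).mpr hlt
        _ = N ^ 2 := by field_simp
    constructor <;> nlinarith [hA2, hNpos]
  have hcase : (-vy) ≠ 0 ∨ c ≠ 0 ∨ N ≤ |vx| := by
    rcases eq_or_ne vy 0 with h | h
    · rcases eq_or_ne c 0 with h2 | h2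
      · right; right
        rw [hN, h]
        rw [show (0:ℝ) ^ 2 + vx ^ 2 = vx ^ 2 by ring, Real.sqrt_sq_eq_abs]
      · right; left; exact h2
    · left; simpa using h
  obtain ⟨R, hR⟩ := real_bound (-vy) c vx N hNpos hcase
  apply Set.Finite.subset (Set.finite_le_nat ⌈R⌉₊)
  intro n hn
  obtain ⟨hn1, hne⟩ := hn
  have hkey := key n ⟨hn1, hne⟩
  have hn1' : (1:ℝ) ≤ n := by exact_mod_cast hn1
  have := hR n hn1' hkey
  have h2 : (n : ℝ) ≤ (⌈R⌉₊ : ℝ) := le_trans this (Nat.le_ceil R)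
  exact_mod_cast h2

/-- The family of open discs `F_n = B((n, 1/n), 1/n)`, `n ≥ 1`, cannot be pierced by a finite
set of lines: every line meets only finitely many members, and no finite family of lines
pierces all members. -/
theorem discs_not_pierced_by_finitely_many_lines :
    (∀ L : AffineSubspace ℝ (EuclideanSpace ℝ (Fin 2)), IsLine L →
      {n : ℕ | 1 ≤ n ∧
        (Metric.ball (discCenter n) (1 / n) ∩
          (L : Set (EuclideanSpace ℝ (Fin 2)))).Nonempty}.Finite) ∧
    ¬ ∃ P : Set (AffineSubspace ℝ (EuclideanSpace ℝ (Fin 2))),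
        P.Finite ∧ (∀ L ∈ P, IsLine L) ∧
        ∀ n : ℕ, 1 ≤ n → ∃ L ∈ P,
          (Metric.ball (discCenter n) (1 / n) ∩
            (L : Set (EuclideanSpace ℝ (Fin 2)))).Nonempty := by
  refine ⟨main_lemma, ?_⟩
  rintro ⟨P, hPfin, hPline, hP⟩
  have hsub : {n : ℕ | 1 ≤ n} ⊆ ⋃ L ∈ P, {n : ℕ | 1 ≤ n ∧
      (Metric.ball (discCenter n) (1 / n) ∩
        (L : Set (EuclideanSpace ℝ (Fin 2)))).Nonempty} := by
    intro n hn
    obtain ⟨L, hLP, hLne⟩ := hP n hn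
    exact Set.mem_biUnion hLP ⟨hn, hLne⟩
  have hfin : (⋃ L ∈ P, {n : ℕ | 1 ≤ n ∧
      (Metric.ball (discCenter n) (1 / n) ∩
        (L : Set (EuclideanSpace ℝ (Fin 2)))).Nonempty}).Finite :=
    Set.Finite.biUnion hPfin (fun L hL => main_lemma L (hPline L hL))
  have : ({n : ℕ | 1 ≤ n}).Finite := hfin.subset hsub
  have hinf : ({n : ℕ | 1 ≤ n}).Infinite := by
    have : {n : ℕ | 1 ≤ n} = Set.Ici 1 := rfl
    rw [this]
    exact Set.Ici_infinite 1
  exact hinf this
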